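/- Let H be a connected simple graph with minimum degree at least 2 satisfying γ_dR(H) ≤ 12·n(H)/11, and let u ∈ V(H). Let G be the graph obtained from the disjoint union of H, a 5-cycle C_5 with vertices z_1,…,z_5, and C_{5,k} with vertices x_1,…,x_5, y_1,…,y_k (k ≥ 1, where x_1 is adjacent to y_1), by adding an edge joining x_1 to exactly one vertex of C_5 and adding the edge u y_k. Then γ_dR(G) ≤ 12·n(G)/11. -/
import Mathlib


/-- A double Roman dominating function on a simple graph `G`:
values in `{0,1,2,3}`, every vertex with value `0` has two neighbors with value `2`
or one neighbor with value `3`, and every vertex with value `1` has a neighbor with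
value at least `2`. -/
def IsDRDF {V : Type*} (G : SimpleGraph V) (f : V → ℕ) : Prop :=
  (∀ v, f v ≤ 3) ∧
  (∀ v, f v = 0 →
    (∃ u w, u ≠ w ∧ G.Adj v u ∧ G.Adj v w ∧ f u = 2 ∧ f w = 2) ∨ ∃ u, G.Adj v u ∧ f u = 3) ∧
  (∀ v, f v = 1 → ∃ u, G.Adj v u ∧ 2 ≤ f u)

/-- The double Roman domination number: the minimum weight of a DRDF. -/
noncomputable def gammaDR {V : Type*} [Fintype V] (G : SimpleGraph V) : ℕ :=
  sInf {w | ∃ f, IsDRDF G f ∧ ∑ v, f v = w}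

/-- Base relation for the graph `C_{m,k}`: a cycle `x_1 ⋯ x_m x_1` (here `Fin m`, with
`x_1` being `0`), a path `y_1 ⋯ y_k` (here `Fin k`, with `y_1` being `0` and `y_k` being
`k-1`), together with the edge `x_1 y_1`. -/
def cmkR (m k : ℕ) : (Fin m ⊕ Fin k) → (Fin m ⊕ Fin k) → Prop
  | .inl u, .inl v => (u.val + 1) % m = v.val
  | .inr i, .inr j => i.val + 1 = j.val
  | .inl u, .inr j => u.val = 0 ∧ j.val = 0
  | .inr _, .inl _ => False

/-- The graph `C_{m,k}`. -/
def Cmk (m k : ℕ) : SimpleGraph (Fin m ⊕ Fin k) := SimpleGraph.fromRel (cmkR m k)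
/-- Base relation for the graph obtained from the disjoint union of `H`, a `5`-cycle
`C_5` with vertices `z_1, …, z_5` (the first `Fin 5` summand, `z_1` being `0`), and
`C_{5,k}` with vertices `x_1, …, x_5, y_1, …, y_k` (the `Fin 5 ⊕ Fin k` summand),
by adding an edge joining `x_1` to exactly one vertex of `C_5` (namely `z_1`) and the
edge `u y_k`. -/
def join55R {V : Type*} (H : SimpleGraph V) (u : V) (k : ℕ) :
    (V ⊕ (Fin 5 ⊕ (Fin 5 ⊕ Fin k))) → (V ⊕ (Fin 5 ⊕ (Fin 5 ⊕ Fin k))) → Prop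
  | .inl a, .inl b => H.Adj a b
  | .inr (.inl a), .inr (.inl b) => (a.val + 1) % 5 = b.val
  | .inr (.inr a), .inr (.inr b) => cmkR 5 k a b
  | .inr (.inr (.inl x)), .inr (.inl z) => x.val = 0 ∧ z.val = 0
  | .inl a, .inr (.inr (.inr j)) => a = u ∧ j.val + 1 = k
  | _, _ => False

/-- The graph obtained from the disjoint union of `H`, a `5`-cycle `C_5` and
`C_{5,k}`, by joining `x_1` to exactly one vertex of `C_5` and joining `u` to
`y_k`. -/
def join55 {V : Type*} (H : SimpleGraph V) (u : V) (k : ℕ) :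
    SimpleGraph (V ⊕ (Fin 5 ⊕ (Fin 5 ⊕ Fin k))) :=
  SimpleGraph.fromRel (join55R H u k)

def yv (k j : ℕ) : ℕ :=
  if (j + 1) % 3 = 0 then 3 else if j + 1 = k ∧ k % 3 = 2 then 2 else 0

def newVal (k : ℕ) : (Fin 5 ⊕ (Fin 5 ⊕ Fin k)) → ℕ
  | .inl z => ![0, 0, 3, 0, 2] z
  | .inr (.inl x) => ![3, 0, 3, 0, 0] x
  | .inr (.inr j) => yv k j.val

section Main
variable {V : Type*} (H : SimpleGraph V) (u : V) (k : ℕ)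

lemma join55_adj (a b) :
    (join55 H u k).Adj a b ↔ a ≠ b ∧ (join55R H u k a b ∨ join55R H u k b a) := by
  simp [join55, SimpleGraph.fromRel_adj]

lemma adj_inl {a b : V} (h : H.Adj a b) :
    (join55 H u k).Adj (.inl a) (.inl b) := by
  rw [join55_adj]
  exact ⟨by simpa using h.ne, Or.inl h⟩

lemma drdf_ext {f : V → ℕ} (hf : IsDRDF H f) (_hk : 1 ≤ k) :
    IsDRDF (join55 H u k) (Sum.elim f (newVal k)) := by
  obtain ⟨hf3, hf0, hf1⟩ := hf
  refine ⟨?_, ?_, ?_⟩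
  · rintro (a | b)
    · exact hf3 a
    · rcases b with z | x | j
      · fin_cases z <;> simp [newVal]
      · fin_cases x <;> simp [newVal]
      · show yv k j.val ≤ 3
        unfold yv; split_ifs <;> omega
  · rintro (a | b) hv
    · rcases hf0 a hv with ⟨p, q, hpq, hp, hq, hp2, hq2⟩ | ⟨p, hp, hp3⟩
      · exact Or.inl ⟨.inl p, .inl q, by simpa using hpq,
          adj_inl H u k hp, adj_inl H u k hq, hp2, hq2⟩
      · exact Or.inr ⟨.inl p, adj_inl H u k hp, hp3⟩
    · right
      rcases b with z | x | j
      · fin_cases z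
        · -- z₁ : neighbor x₁ (value 3)
          refine ⟨.inr (.inr (.inl 0)), ?_, by simp [newVal]⟩
          rw [join55_adj]
          refine ⟨by simp, Or.inr ?_⟩
          show (0 : Fin 5).val = 0 ∧ (0 : Fin 5).val = 0
          exact ⟨rfl, rfl⟩
        · -- z₂ : neighbor z₃ (value 3)
          refine ⟨.inr (.inl 2), ?_, by simp [newVal]⟩
          rw [join55_adj]
          refine ⟨by simp, Or.inl ?_⟩
          show ((1 : Fin 5).val + 1) % 5 = (2 : Fin 5).val
          decide
        · simp [newVal] at hv
        · -- z₄ : neighbor z₃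
          refine ⟨.inr (.inl 2), ?_, by simp [newVal]⟩
          rw [join55_adj]
          refine ⟨by simp, Or.inr ?_⟩
          show ((2 : Fin 5).val + 1) % 5 = (3 : Fin 5).val
          decide
        · simp [newVal] at hv
      · fin_cases x
        · simp [newVal] at hv
        · -- x₂ : neighbor x₁
          refine ⟨.inr (.inr (.inl 0)), ?_, by simp [newVal]⟩
          rw [join55_adj]
          refine ⟨by simp, Or.inr ?_⟩
          show cmkR 5 k (.inl 0) (.inl 1)
          show ((0 : Fin 5).val + 1) % 5 = (1 : Fin 5).val
          decide
        · simp [newVal] at hv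
        · -- x₄ : neighbor x₃
          refine ⟨.inr (.inr (.inl 2)), ?_, by simp [newVal]⟩
          rw [join55_adj]
          refine ⟨by simp, Or.inr ?_⟩
          show cmkR 5 k (.inl 2) (.inl 3)
          show ((2 : Fin 5).val + 1) % 5 = (3 : Fin 5).val
          decide
        · -- x₅ : neighbor x₁
          refine ⟨.inr (.inr (.inl 0)), ?_, by simp [newVal]⟩
          rw [join55_adj]
          refine ⟨by simp, Or.inl ?_⟩
          show cmkR 5 k (.inl 4) (.inl 0)
          show ((4 : Fin 5).val + 1) % 5 = (0 : Fin 5).val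
          decide
      · -- y vertices
        have hv' : yv k j.val = 0 := hv
        have h3 : (j.val + 1) % 3 ≠ 0 := by
          intro h; unfold yv at hv'; simp [h] at hv'
        have htail : ¬(j.val + 1 = k ∧ k % 3 = 2) := by
          intro h; unfold yv at hv'; rw [if_neg h3, if_pos h] at hv'; omega
        have hm3 : j.val % 3 = 0 ∨ j.val % 3 = 1 ∨ j.val % 3 = 2 := by omega
        rcases hm3 with h | h | h
        · -- j ≡ 0 (mod 3)
          rcases Nat.eq_zero_or_pos j.val with hz | hz
          · -- y₁ : neighbor x₁
            refine ⟨.inr (.inr (.inl 0)), ?_, by simp [newVal]⟩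
            rw [join55_adj]
            refine ⟨by simp, Or.inr ?_⟩
            show cmkR 5 k (.inl 0) (.inr j)
            exact ⟨rfl, hz⟩
          · -- neighbor y_{j-1}, value 3 since j % 3 = 0
            refine ⟨.inr (.inr (.inr ⟨j.val - 1, by omega⟩)), ?_, ?_⟩
            · rw [join55_adj]
              refine ⟨by simp [Fin.ext_iff]; omega, Or.inr ?_⟩
              show cmkR 5 k (.inr ⟨j.val - 1, by omega⟩) (.inr j)
              show j.val - 1 + 1 = j.val
              omega
            · show yv k (j.val - 1) = 3
              unfold yv
              rw [if_pos (by omega)]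
        · -- j ≡ 1 (mod 3) : then (j+1)%3 = 2; neighbor y_{j+1} with value 3
          have hlt : j.val + 1 < k := by
            rcases Nat.lt_or_ge (j.val + 1) k with h' | h'
            · exact h'
            · exfalso
              have : j.val + 1 = k := by omega
              exact htail ⟨this, by omega⟩
          refine ⟨.inr (.inr (.inr ⟨j.val + 1, hlt⟩)), ?_, ?_⟩
          · rw [join55_adj]
            refine ⟨by simp [Fin.ext_iff], Or.inl ?_⟩
            show cmkR 5 k (.inr j) (.inr ⟨j.val + 1, hlt⟩)
            show j.val + 1 = j.val + 1
            rfl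
          · show yv k (j.val + 1) = 3
            unfold yv
            rw [if_pos (by omega)]
        · -- j ≡ 2 (mod 3) : impossible since then value is 3
          exact absurd (by omega) h3
  · rintro (a | b) hv
    · rcases hf1 a hv with ⟨p, hp, hp2⟩
      exact ⟨.inl p, adj_inl H u k hp, hp2⟩
    · exfalso
      rcases b with z | x | j
      · fin_cases z <;> simp [newVal] at hv
      · fin_cases x <;> simp [newVal] at hv
      · have hv' : yv k j.val = 1 := hv
        unfold yv at hv'
        split_ifs at hv' <;> omega

end Main

lemma sum_yv_le (k : ℕ) : ∑ i ∈ Finset.range k, yv k i ≤ k := by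
  have hbase : ∀ n, ∑ i ∈ Finset.range n, (if (i + 1) % 3 = 0 then 3 else 0) = 3 * (n / 3) := by
    intro n
    induction n with
    | zero => simp
    | succ m ih => rw [Finset.sum_range_succ, ih]; split_ifs <;> omega
  by_cases hp : k % 3 = 2
  · have h1 : ∀ i, yv k i = (if (i + 1) % 3 = 0 then 3 else 0) + (if i = k - 1 then 2 else 0) := by
      intro i; unfold yv; split_ifs <;> omega
    calc ∑ i ∈ Finset.range k, yv k i
        = ∑ i ∈ Finset.range k,
            ((if (i + 1) % 3 = 0 then 3 else 0) + (if i = k - 1 then 2 else 0)) :=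
          Finset.sum_congr rfl fun i _ => h1 i
      _ = 3 * (k / 3) + ∑ i ∈ Finset.range k, (if i = k - 1 then 2 else 0) := by
          rw [Finset.sum_add_distrib, hbase]
      _ ≤ 3 * (k / 3) + 2 := by
          gcongr
          rw [Finset.sum_ite_eq']
          split <;> omega
      _ ≤ k := by omega
  · have h1 : ∀ i, yv k i = (if (i + 1) % 3 = 0 then 3 else 0) := by
      intro i; unfold yv; split_ifs <;> omega
    calc ∑ i ∈ Finset.range k, yv k i
        = ∑ i ∈ Finset.range k, (if (i + 1) % 3 = 0 then 3 else 0) :=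
          Finset.sum_congr rfl fun i _ => h1 i
      _ = 3 * (k / 3) := hbase k
      _ ≤ k := by omega

/-- If `H` is a connected graph with minimum degree at least `2` satisfying
`γ_dR(H) ≤ 12 n(H) / 11`, `u ∈ V(H)`, and `G` is obtained from the disjoint union of
`H`, a `5`-cycle `C_5` and `C_{5,k}` (`k ≥ 1`) by joining `x_1` to exactly one vertex
of `C_5` and joining `u` to `y_k`, then `γ_dR(G) ≤ 12 n(G) / 11`. -/
theorem gammaDR_join55_le {V : Type*} [Fintype V] (H : SimpleGraph V)
    (hconn : H.Connected) (hdeg : ∀ v, 2 ≤ {w | H.Adj v w}.ncard)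
    (hH : (gammaDR H : ℚ) ≤ 12 * (Fintype.card V) / 11)
    (u : V) (k : ℕ) (hk : 1 ≤ k) :
    (gammaDR (join55 H u k) : ℚ) ≤
      12 * (Fintype.card (V ⊕ (Fin 5 ⊕ (Fin 5 ⊕ Fin k)))) / 11 := by
  classical
  have hne : {w | ∃ f, IsDRDF H f ∧ ∑ v, f v = w}.Nonempty :=
    ⟨∑ _v : V, 3, fun _ => 3,
      ⟨fun _ => le_refl 3, fun v h => by simp at h, fun v h => by simp at h⟩, rfl⟩
  obtain ⟨f, hf, hfsum⟩ := Nat.sInf_mem hne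
  replace hfsum : ∑ v, f v = gammaDR H := hfsum
  have hg : IsDRDF (join55 H u k) (Sum.elim f (newVal k)) := drdf_ext H u k hf hk
  have hGle : gammaDR (join55 H u k) ≤ gammaDR H + (11 + k) := by
    have hle : gammaDR (join55 H u k) ≤ ∑ v, Sum.elim f (newVal k) v :=
      Nat.sInf_le ⟨Sum.elim f (newVal k), hg, rfl⟩
    refine hle.trans ?_
    rw [Fintype.sum_sum_type]
    have h1 : ∑ a : V, Sum.elim f (newVal k) (.inl a) = gammaDR H := by
      simpa using hfsum
    have h2 : ∑ b : Fin 5 ⊕ (Fin 5 ⊕ Fin k), Sum.elim f (newVal k) (.inr b) ≤ 11 + k := by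
      simp only [Sum.elim_inr]
      rw [Fintype.sum_sum_type]
      have hz : ∑ z : Fin 5, newVal k (.inl z) = 5 := by
        simp [newVal, Fin.sum_univ_five]
      have hx : ∑ b : Fin 5 ⊕ Fin k, newVal k (.inr b) ≤ 6 + k := by
        rw [Fintype.sum_sum_type]
        have hx1 : ∑ x : Fin 5, newVal k (.inr (.inl x)) = 6 := by
          simp [newVal, Fin.sum_univ_five]
        have hy : ∑ j : Fin k, newVal k (.inr (.inr j)) ≤ k := by
          have : ∑ j : Fin k, newVal k (.inr (.inr j)) = ∑ i ∈ Finset.range k, yv k i := by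
            rw [← Fin.sum_univ_eq_sum_range (fun i => yv k i) k]
            rfl
          rw [this]
          exact sum_yv_le k
        omega
      omega
    omega
  have hcard : Fintype.card (V ⊕ (Fin 5 ⊕ (Fin 5 ⊕ Fin k))) = Fintype.card V + (10 + k) := by
    simp [Fintype.card_sum]; omega
  rw [hcard]
  have hq : (gammaDR (join55 H u k) : ℚ) ≤ (gammaDR H : ℚ) + (11 + k) := by
    exact_mod_cast hGle
  have hkq : (1 : ℚ) ≤ k := by exact_mod_cast hk
  push_cast
  push_cast at hH
  linarith
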